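/- In the CFI graph Y_f(G) built on a 3-regular graph G, every middle vertex has exactly 19 distinct vertices within graph distance 3 of it (including itself), while every edge vertex has exactly 20. Consequently, any graph isomorphism between Y_f(G) and Y_g(G) maps middle vertices to middle vertices and edge vertices to edge vertices. -/

import Mathlib

open SimpleGraph

set_option linter.unusedSectionVars false
set_option maxHeartbeats 1000000

section Helpers

variable {A : Type*}

/-- membership in ball of radius 3 iff there is a chain of length ≤ 3. -/
lemma ball3_iff (H : SimpleGraph A) (x w : A) :
    (H.Reachable x w ∧ H.dist x w ≤ 3) ↔
    (w = x ∨ H.Adj x w ∨ (∃ y, H.Adj x y ∧ H.Adj y w) ∨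
      ∃ y z, H.Adj x y ∧ H.Adj y z ∧ H.Adj z w) := by
  constructor
  · rintro ⟨hr, hd⟩
    obtain ⟨p, hp⟩ := hr.exists_walk_length_eq_dist
    rw [← hp] at hd; clear hp hr
    match p, hd with
    | .nil, _ => exact Or.inl rfl
    | .cons h .nil, _ => exact Or.inr (Or.inl h)
    | .cons h (.cons h2 .nil), _ => exact Or.inr (Or.inr (Or.inl ⟨_, h, h2⟩))
    | .cons h (.cons h2 (.cons h3 .nil)), _ =>
        exact Or.inr (Or.inr (Or.inr ⟨_, _, h, h2, h3⟩))
    | .cons h (.cons h2 (.cons h3 (.cons h4 q))), hd => exact absurd hd (by simp [SimpleGraph.Walk.length_cons])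
  · rintro (rfl | h | ⟨y, h1, h2⟩ | ⟨y, z, h1, h2, h3⟩)
    · exact ⟨Reachable.refl _, by rw [SimpleGraph.dist_self]; omega⟩
    · refine ⟨h.reachable, le_trans (H.dist_le (Walk.cons h Walk.nil)) (by norm_num [SimpleGraph.Walk.length_cons, SimpleGraph.Walk.length_nil])⟩
    · refine ⟨Reachable.trans h1.reachable h2.reachable,
        le_trans (H.dist_le (Walk.cons h1 (Walk.cons h2 Walk.nil))) (by norm_num [SimpleGraph.Walk.length_cons, SimpleGraph.Walk.length_nil])⟩
    · refine ⟨Reachable.trans h1.reachable (Reachable.trans h2.reachable h3.reachable),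
        le_trans (H.dist_le (Walk.cons h1 (Walk.cons h2 (Walk.cons h3 Walk.nil)))) (by norm_num [SimpleGraph.Walk.length_cons, SimpleGraph.Walk.length_nil])⟩

end Helpers

section FinsetHelpers

variable {V : Type*} [DecidableEq V]

/-- flip membership of `a` in `S`. -/
def flipMem (a : V) (S : Finset V) : Finset V := if a ∈ S then S.erase a else insert a S

lemma flipMem_flipMem (a : V) (S : Finset V) : flipMem a (flipMem a S) = S := by
  unfold flipMem
  by_cases h : a ∈ S <;> simp [h, Finset.insert_erase, Finset.erase_insert]

lemma mem_flipMem_self (a : V) (S : Finset V) : a ∈ flipMem a S ↔ a ∉ S := by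
  unfold flipMem; by_cases h : a ∈ S <;> simp [h]

lemma mem_flipMem_other {x a : V} (hxa : x ≠ a) (S : Finset V) :
    x ∈ flipMem a S ↔ x ∈ S := by
  unfold flipMem; by_cases h : a ∈ S <;> simp [h, hxa, Finset.mem_erase, Finset.mem_insert]

lemma flipMem_subset {a : V} {A S : Finset V} (ha : a ∈ A) (hS : S ⊆ A) :
    flipMem a S ⊆ A := by
  unfold flipMem
  by_cases h : a ∈ S <;> simp [h]
  · exact (Finset.erase_subset a S).trans hS
  · exact Finset.insert_subset ha hS

lemma card_flipMem (a : V) (S : Finset V) :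
    Even (flipMem a S).card ↔ ¬ Even S.card := by
  unfold flipMem
  by_cases h : a ∈ S
  · rw [if_pos h, Finset.card_erase_of_mem h]
    have h1 : 1 ≤ S.card := Finset.card_pos.mpr ⟨a, h⟩
    rw [Nat.even_sub h1]
    rw [Nat.even_iff, Nat.even_iff]
    omega
  · rw [if_neg h, Finset.card_insert_of_notMem h]
    rw [Nat.even_add_one]

/-- even subsets of `A`. -/
def evens (A : Finset V) : Finset (Finset V) := A.powerset.filter fun S => Even S.card

lemma mem_evens {A S : Finset V} : S ∈ evens A ↔ S ⊆ A ∧ Even S.card := by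
  simp [evens]

/-- even subsets of `A` with prescribed membership bit of `a`. -/
def evensBit (A : Finset V) (a : V) (β : Bool) : Finset (Finset V) :=
  (evens A).filter fun S => decide (a ∈ S) = β

lemma mem_evensBit {A S : Finset V} {a : V} {β : Bool} :
    S ∈ evensBit A a β ↔ S ⊆ A ∧ Even S.card ∧ decide (a ∈ S) = β := by
  simp [evensBit, mem_evens, and_assoc]

lemma card_evens {A : Finset V} (hA : A.card = 3) : (evens A).card = 4 := by
  obtain ⟨a, ha⟩ : ∃ a, a ∈ A := Finset.card_pos.mp (by omega)
  have key : (evens A).card = (A.erase a).powerset.card := by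
    refine Finset.card_bij' (fun S _ => S.erase a)
      (fun U _ => if Even U.card then U else insert a U) ?hi ?hj ?li ?ri
    case hi =>
      intro S hS
      rw [mem_evens] at hS
      rw [Finset.mem_powerset]
      exact Finset.erase_subset_erase a hS.1
    case hj =>
      intro U hU
      rw [Finset.mem_powerset] at hU
      have haU : a ∉ U := fun h => (Finset.mem_erase.mp (hU h)).1 rfl
      by_cases h : Even U.card
      · rw [if_pos h, mem_evens]
        exact ⟨hU.trans (Finset.erase_subset a A), h⟩
      · rw [if_neg h, mem_evens]
        refine ⟨Finset.insert_subset ha (hU.trans (Finset.erase_subset a A)), ?_⟩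
        rw [Finset.card_insert_of_notMem haU]
        simpa [Nat.even_add_one] using h
    case li =>
      intro S hS
      rw [mem_evens] at hS
      by_cases h : a ∈ S
      · have h1 : ¬ Even ((S.erase a).card) := by
          rw [Finset.card_erase_of_mem h]
          intro hcon
          have h2 := hS.2
          have h3 : 1 ≤ S.card := Finset.card_pos.mpr ⟨a, h⟩
          rw [Nat.even_iff] at hcon h2
          omega
        rw [if_neg h1, Finset.insert_erase h]
      · rw [Finset.erase_eq_of_notMem h, if_pos hS.2]
    case ri =>
      intro U hU
      rw [Finset.mem_powerset] at hU
      have haU : a ∉ U := fun h => (Finset.mem_erase.mp (hU h)).1 rfl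
      by_cases h : Even U.card
      · rw [if_pos h, Finset.erase_eq_of_notMem haU]
      · rw [if_neg h, Finset.erase_insert haU]
  rw [key, Finset.card_powerset, Finset.card_erase_of_mem ha, hA]
  norm_num

lemma card_evensBit {A : Finset V} (hA : A.card = 3) {a : V} (ha : a ∈ A) (β : Bool) :
    (evensBit A a β).card = 2 := by
  -- second element w ≠ a
  obtain ⟨w, hw⟩ : ∃ w, w ∈ A.erase a :=
    Finset.card_pos.mp (by rw [Finset.card_erase_of_mem ha, hA]; omega)
  obtain ⟨hwa, hwA⟩ := Finset.mem_erase.mp hw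
  have hbij : ∀ β : Bool, (evensBit A a β).card = (evensBit A a (!β)).card := by
    intro β
    apply Finset.card_bij' (i := fun S _ => flipMem a (flipMem w S))
      (j := fun S _ => flipMem w (flipMem a S))
    · intro S hS
      rw [mem_evensBit] at hS ⊢
      refine ⟨flipMem_subset ha (flipMem_subset hwA hS.1), ?_, ?_⟩
      · rw [card_flipMem, card_flipMem]; simp [hS.2.1]
      · have hiff : (a ∈ flipMem a (flipMem w S)) ↔ ¬ (a ∈ S) := by
          rw [mem_flipMem_self, mem_flipMem_other (Ne.symm hwa)]
        rw [decide_eq_decide.mpr hiff, decide_not, hS.2.2]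
    · intro S hS
      rw [mem_evensBit] at hS ⊢
      refine ⟨flipMem_subset hwA (flipMem_subset ha hS.1), ?_, ?_⟩
      · rw [card_flipMem, card_flipMem]; simp [hS.2.1]
      · have hiff : (a ∈ flipMem w (flipMem a S)) ↔ ¬ (a ∈ S) := by
          rw [mem_flipMem_other (Ne.symm hwa), mem_flipMem_self]
        rw [decide_eq_decide.mpr hiff, decide_not, hS.2.2, Bool.not_not]
    · intro S _; rw [flipMem_flipMem, flipMem_flipMem]
    · intro S _; rw [flipMem_flipMem, flipMem_flipMem]
  have hsplit : (evensBit A a true).card + (evensBit A a false).card = (evens A).card := by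
    unfold evensBit
    have := Finset.card_filter_add_card_filter_not
      (s := evens A) (p := fun S => decide (a ∈ S) = true)
    simpa using this
  have h4 := card_evens hA
  have hb := hbij true
  simp only [Bool.not_true] at hb
  cases β
  · omega
  · omega

lemma exists_twoBits {A : Finset V} (hA : A.card = 3) {a a' : V} (ha : a ∈ A) (ha' : a' ∈ A)
    (hne : a ≠ a') (b β : Bool) :
    ∃ S, S ∈ evensBit A a b ∧ decide (a' ∈ S) = β := by
  obtain ⟨w, hw⟩ : ∃ w, w ∈ (A.erase a).erase a' := by
    apply Finset.card_pos.mp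
    rw [Finset.card_erase_of_mem (Finset.mem_erase.mpr ⟨hne.symm, ha'⟩),
      Finset.card_erase_of_mem ha, hA]
    omega
  have hwa' : w ≠ a' := (Finset.mem_erase.mp hw).1
  have hwa : w ≠ a := (Finset.mem_erase.mp (Finset.mem_erase.mp hw).2).1
  have hwA : w ∈ A := (Finset.mem_erase.mp (Finset.mem_erase.mp hw).2).2
  refine ⟨(if b then {a} else ∅) ∪ (if β then {a'} else ∅) ∪ (if b ^^ β then {w} else ∅), ?_, ?_⟩
  · rw [mem_evensBit]
    refine ⟨?_, ?_, ?_⟩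
    · cases b <;> cases β <;> simp [Finset.insert_subset_iff, ha, ha', hwA,
        Finset.union_subset_iff]
    · cases b <;> cases β <;>
        simp [Finset.card_insert_of_notMem, Finset.mem_insert, Finset.mem_singleton,
          hne, hwa, hwa', Ne.symm, Finset.card_union_of_disjoint, Finset.disjoint_singleton_left]
    · cases b <;> cases β <;> simp [hne, hwa.symm, hwa'.symm, Ne.symm hne]
  · cases b <;> cases β <;> simp [hne, hwa.symm, hwa'.symm, Ne.symm hne]

end FinsetHelpers

variable {V : Type*} [Fintype V] [DecidableEq V]

/-- Vertices of the CFI graph `X_f(G)`: a middle vertex `(v, T)` for each vertex `v`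
of `G` and each even subset `T` of the neighbors of `v` (encoding the even-parity
bit-vector `b_u = [u ∈ T]`), and an edge vertex `(v, u, b)` for each directed edge
`(v,u)` of `G` and `b ∈ {0,1}`. -/
def CFIVert (G : SimpleGraph V) [DecidableRel G.Adj] : Type _ :=
  {x : (V × Finset V) ⊕ (V × V × Bool) //
    Sum.elim (fun p => p.2 ⊆ G.neighborFinset p.1 ∧ Even p.2.card)
      (fun p => G.Adj p.1 p.2.1) x}

/-- The CFI graph `X_f(G)` (as an uncolored graph this is `Y_f(G)`): middle vertex
`v_T` is adjacent to edge vertex `(v,u)_b` iff `b = [u ∈ T]`, and edge vertices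
`(v,u)_b` and `(u,v)_{b ⊕ f((u,v))}` are joined for every edge `(u,v)` of `G`. -/
def CFIGraph (G : SimpleGraph V) [DecidableRel G.Adj] (f : Sym2 V → Bool) :
    SimpleGraph (CFIVert G) :=
  SimpleGraph.fromRel fun a b =>
    match a.1, b.1 with
    | .inl (v, T), .inr (w, u, c) => v = w ∧ c = decide (u ∈ T)
    | .inr (v, u, c), .inr (v', u', c') => v = u' ∧ u = v' ∧ c' = (c ^^ f s(v, u))
    | _, _ => False

/-- The coloring of `X_f(G)`: each middle vertex of the gadget at `v` is colored by
`v`, and the pair of edge vertices `(v,u)_0, (v,u)_1` is colored by `(v,u)`. -/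
def CFIColor (G : SimpleGraph V) [DecidableRel G.Adj] : CFIVert G → V ⊕ (V × V) :=
  fun a => Sum.elim (fun p => Sum.inl p.1) (fun p => Sum.inr (p.1, p.2.1)) a.1

/-- `f : E(G) → {0,1}` has even parity if the number of edges with `f(e) = 1` is even. -/
def EvenParity (G : SimpleGraph V) [DecidableRel G.Adj] (f : Sym2 V → Bool) : Prop :=
  Even ((G.edgeFinset.filter fun e => f e = true).card)

attribute [reducible] CFIVert

section Adj

variable {G : SimpleGraph V} [DecidableRel G.Adj] {f : Sym2 V → Bool}

instance : DecidableEq (CFIVert G) := fun a b =>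
  decidable_of_iff (a.1 = b.1) (by
    constructor
    · intro h; exact Subtype.ext h
    · intro h; rw [h])

lemma cfivert_cases (x : CFIVert G) :
    (∃ p h, x = ⟨Sum.inl p, h⟩) ∨ (∃ p h, x = ⟨Sum.inr p, h⟩) := by
  obtain ⟨val, hp⟩ := x
  cases val with
  | inl p => exact Or.inl ⟨p, hp, rfl⟩
  | inr p => exact Or.inr ⟨p, hp, rfl⟩

lemma mid_prop {v : V} {T : Finset V} {h} (_ : (⟨Sum.inl (v, T), h⟩ : CFIVert G) = ⟨Sum.inl (v, T), h⟩) :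
    T ⊆ G.neighborFinset v ∧ Even T.card := h

/-- no two middle vertices are adjacent -/
lemma not_adj_mid_mid {p q : V × Finset V} {hp hq} :
    ¬ (CFIGraph G f).Adj ⟨Sum.inl p, hp⟩ ⟨Sum.inl q, hq⟩ := by
  rw [CFIGraph, SimpleGraph.fromRel_adj]
  rintro ⟨-, h | h⟩ <;> exact h

lemma adj_mid_edge {v : V} {T : Finset V} {w u : V} {c : Bool} {hp hq} :
    (CFIGraph G f).Adj ⟨Sum.inl (v, T), hp⟩ ⟨Sum.inr (w, u, c), hq⟩ ↔
      v = w ∧ c = decide (u ∈ T) := by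
  rw [CFIGraph, SimpleGraph.fromRel_adj]
  constructor
  · rintro ⟨-, h | h⟩
    · exact h
    · exact h.elim
  · rintro ⟨rfl, rfl⟩
    exact ⟨fun hcon => Sum.inl_ne_inr (congrArg Subtype.val hcon), Or.inl ⟨rfl, rfl⟩⟩

lemma adj_edge_edge {v u v' u' : V} {c c' : Bool} {hp hq} :
    (CFIGraph G f).Adj ⟨Sum.inr (v, u, c), hp⟩ ⟨Sum.inr (v', u', c'), hq⟩ ↔
      v = u' ∧ u = v' ∧ c' = (c ^^ f s(v, u)) := by
  rw [CFIGraph, SimpleGraph.fromRel_adj]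
  constructor
  · rintro ⟨hne, h | h⟩
    · exact h
    · obtain ⟨rfl, rfl, hc⟩ := h
      refine ⟨rfl, rfl, ?_⟩
      rw [hc, Sym2.eq_swap, Bool.xor_assoc, Bool.xor_self, Bool.xor_false]
  · rintro ⟨rfl, rfl, rfl⟩
    have hvu : v ≠ u := G.ne_of_adj hp
    refine ⟨?_, Or.inl ⟨rfl, rfl, rfl⟩⟩
    intro hcon
    rw [Subtype.mk.injEq, Sum.inr.injEq, Prod.mk.injEq] at hcon
    exact hvu hcon.1

/-- all neighbors of a middle vertex -/
lemma adj_mid_iff {v : V} {T : Finset V} {hp} {w : CFIVert G} :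
    (CFIGraph G f).Adj ⟨Sum.inl (v, T), hp⟩ w ↔
      ∃ u, ∃ h : G.Adj v u, w = ⟨Sum.inr (v, u, decide (u ∈ T)), h⟩ := by
  constructor
  · intro h
    obtain ⟨(q | ⟨v', u', c⟩), hw⟩ := w
    · exact absurd h not_adj_mid_mid
    · rw [adj_mid_edge] at h
      obtain ⟨rfl, rfl⟩ := h
      exact ⟨u', hw, rfl⟩
  · rintro ⟨u, h, rfl⟩
    refine adj_mid_edge.mpr ?_
    exact ⟨rfl, rfl⟩

/-- all neighbors of an edge vertex -/
lemma adj_edge_iff {v u : V} {b : Bool} {hp} {w : CFIVert G} :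
    (CFIGraph G f).Adj ⟨Sum.inr (v, u, b), hp⟩ w ↔
      ((∃ T, ∃ h : T ⊆ G.neighborFinset v ∧ Even T.card,
        decide (u ∈ T) = b ∧ w = ⟨Sum.inl (v, T), h⟩) ∨
        w = ⟨Sum.inr (u, v, b ^^ f s(v, u)), (G.adj_symm hp)⟩) := by
  constructor
  · intro h
    obtain ⟨(⟨v', T⟩ | ⟨v', u', c⟩), hw⟩ := w
    · rw [SimpleGraph.adj_comm, adj_mid_edge] at h
      obtain ⟨rfl, rfl⟩ := h
      exact Or.inl ⟨T, hw, rfl, rfl⟩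
    · rw [adj_edge_edge] at h
      obtain ⟨rfl, rfl, rfl⟩ := h
      exact Or.inr rfl
  · rintro (⟨T, hT, hb, rfl⟩ | rfl)
    · refine (adj_mid_edge.mpr ?_).symm
      exact ⟨rfl, hb.symm⟩
    · refine adj_edge_edge.mpr ?_
      exact ⟨rfl, rfl, rfl⟩

end Adj

section Pieces

variable (G : SimpleGraph V) [DecidableRel G.Adj] (f : Sym2 V → Bool)

lemma adj_of_mem_nb {v u : V} (h : u ∈ G.neighborFinset v) : G.Adj v u := by
  rwa [SimpleGraph.mem_neighborFinset] at h

/-- all middle vertices of the gadget at `v` -/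
def P1F (v : V) : Finset (CFIVert G) :=
  (evens (G.neighborFinset v)).attach.image
    (fun S => ⟨Sum.inl (v, S.1), mem_evens.mp S.2⟩)

/-- all edge vertices `(v,u)_β`, `u ∈ N(v)` -/
def P2F (v : V) : Finset (CFIVert G) :=
  ((G.neighborFinset v) ×ˢ (Finset.univ : Finset Bool)).attach.image
    (fun p => ⟨Sum.inr (v, p.1.1, p.1.2), adj_of_mem_nb G (Finset.mem_product.mp p.2).1⟩)

/-- the partners `(u,v)_{b_u ⊕ f}` of the edge vertices adjacent to the middle vertex `v_T` -/
def P3F (v : V) (T : Finset V) : Finset (CFIVert G) :=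
  (G.neighborFinset v).attach.image
    (fun u => ⟨Sum.inr (u.1, v, decide (u.1 ∈ T) ^^ f s(v, u.1)),
      (adj_of_mem_nb G u.2).symm⟩)

/-- middle vertices at neighbors `u` of `v` with prescribed `v`-bit -/
def P4F (v : V) (T : Finset V) : Finset (CFIVert G) :=
  (G.neighborFinset v).attach.biUnion (fun u =>
    (evensBit (G.neighborFinset u.1) v (decide (u.1 ∈ T) ^^ f s(v, u.1))).attach.image
      (fun S => ⟨Sum.inl (u.1, S.1),
        ⟨(mem_evensBit.mp S.2).1, (mem_evensBit.mp S.2).2.1⟩⟩))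

/-- edge vertices `(v,u')_β` with `u' ≠ u` -/
def QeF (v u : V) : Finset (CFIVert G) :=
  (((G.neighborFinset v).erase u) ×ˢ (Finset.univ : Finset Bool)).attach.image
    (fun p => ⟨Sum.inr (v, p.1.1, p.1.2),
      adj_of_mem_nb G (Finset.mem_erase.mp (Finset.mem_product.mp p.2).1).2⟩)

/-- reversed edge vertices `(w,v)_γ` with `w ∈ N(v) \ {u}` -/
def QrF (v u : V) : Finset (CFIVert G) :=
  (((G.neighborFinset v).erase u) ×ˢ (Finset.univ : Finset Bool)).attach.image
    (fun p => ⟨Sum.inr (p.1.1, v, p.1.2), by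
      have hm := (Finset.mem_product.mp p.2).1
      exact (adj_of_mem_nb G (Finset.mem_erase.mp hm).2).symm⟩)

/-- middle vertices at `u` with prescribed `v`-bit `β` -/
def Q5F (u v : V) (β : Bool) : Finset (CFIVert G) :=
  (evensBit (G.neighborFinset u) v β).attach.image
    (fun S => ⟨Sum.inl (u, S.1),
      ⟨(mem_evensBit.mp S.2).1, (mem_evensBit.mp S.2).2.1⟩⟩)

variable {G f}

lemma mem_P1F {v : V} {w : CFIVert G} :
    w ∈ P1F G v ↔ ∃ S, w.1 = Sum.inl (v, S) ∧ S ⊆ G.neighborFinset v ∧ Even S.card := by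
  constructor
  · intro h
    obtain ⟨p, -, rfl⟩ := Finset.mem_image.mp h
    exact ⟨p.1, rfl, (mem_evens.mp p.2).1, (mem_evens.mp p.2).2⟩
  · rintro ⟨S, hw1, hsub, hev⟩
    exact Finset.mem_image.mpr ⟨⟨S, mem_evens.mpr ⟨hsub, hev⟩⟩, Finset.mem_attach _ _,
      Subtype.ext hw1.symm⟩

lemma mem_P2F {v : V} {w : CFIVert G} :
    w ∈ P2F G v ↔ ∃ u β, w.1 = Sum.inr (v, u, β) ∧ u ∈ G.neighborFinset v := by
  constructor
  · intro h
    obtain ⟨p, -, rfl⟩ := Finset.mem_image.mp h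
    exact ⟨p.1.1, p.1.2, rfl, (Finset.mem_product.mp p.2).1⟩
  · rintro ⟨u, β, hw1, hu⟩
    exact Finset.mem_image.mpr ⟨⟨(u, β), Finset.mem_product.mpr ⟨hu, Finset.mem_univ _⟩⟩,
      Finset.mem_attach _ _, Subtype.ext hw1.symm⟩

lemma mem_P3F {v : V} {T : Finset V} {w : CFIVert G} :
    w ∈ P3F G f v T ↔
      ∃ u, w.1 = Sum.inr (u, v, decide (u ∈ T) ^^ f s(v, u)) ∧ u ∈ G.neighborFinset v := by
  constructor
  · intro h
    obtain ⟨p, -, rfl⟩ := Finset.mem_image.mp h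
    exact ⟨p.1, rfl, p.2⟩
  · rintro ⟨u, hw1, hu⟩
    exact Finset.mem_image.mpr ⟨⟨u, hu⟩, Finset.mem_attach _ _, Subtype.ext hw1.symm⟩

lemma mem_P4F {v : V} {T : Finset V} {w : CFIVert G} :
    w ∈ P4F G f v T ↔
      ∃ u S, w.1 = Sum.inl (u, S) ∧ u ∈ G.neighborFinset v ∧
        S ⊆ G.neighborFinset u ∧ Even S.card ∧
        decide (v ∈ S) = (decide (u ∈ T) ^^ f s(v, u)) := by
  constructor
  · intro h
    obtain ⟨u, -, hmem⟩ := Finset.mem_biUnion.mp h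
    obtain ⟨p, -, rfl⟩ := Finset.mem_image.mp hmem
    obtain ⟨h1, h2, h3⟩ := mem_evensBit.mp p.2
    exact ⟨u.1, p.1, rfl, u.2, h1, h2, h3⟩
  · rintro ⟨u, S, hw1, hu, h1, h2, h3⟩
    exact Finset.mem_biUnion.mpr ⟨⟨u, hu⟩, Finset.mem_attach _ _,
      Finset.mem_image.mpr ⟨⟨S, mem_evensBit.mpr ⟨h1, h2, h3⟩⟩, Finset.mem_attach _ _,
        Subtype.ext hw1.symm⟩⟩

lemma mem_QeF {v u : V} {w : CFIVert G} :
    w ∈ QeF G v u ↔ ∃ u' β, w.1 = Sum.inr (v, u', β) ∧ u' ∈ G.neighborFinset v ∧ u' ≠ u := by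
  constructor
  · intro h
    obtain ⟨p, -, rfl⟩ := Finset.mem_image.mp h
    have hm := Finset.mem_erase.mp (Finset.mem_product.mp p.2).1
    exact ⟨p.1.1, p.1.2, rfl, hm.2, hm.1⟩
  · rintro ⟨u', β, hw1, hu', hne⟩
    exact Finset.mem_image.mpr ⟨⟨(u', β),
      Finset.mem_product.mpr ⟨Finset.mem_erase.mpr ⟨hne, hu'⟩, Finset.mem_univ _⟩⟩,
      Finset.mem_attach _ _, Subtype.ext hw1.symm⟩

lemma mem_QrF {v u : V} {w : CFIVert G} :
    w ∈ QrF G v u ↔ ∃ u' β, w.1 = Sum.inr (u', v, β) ∧ u' ∈ G.neighborFinset v ∧ u' ≠ u := by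
  constructor
  · intro h
    obtain ⟨p, -, rfl⟩ := Finset.mem_image.mp h
    have hm := Finset.mem_erase.mp (Finset.mem_product.mp p.2).1
    exact ⟨p.1.1, p.1.2, rfl, hm.2, hm.1⟩
  · rintro ⟨u', β, hw1, hu', hne⟩
    exact Finset.mem_image.mpr ⟨⟨(u', β),
      Finset.mem_product.mpr ⟨Finset.mem_erase.mpr ⟨hne, hu'⟩, Finset.mem_univ _⟩⟩,
      Finset.mem_attach _ _, Subtype.ext hw1.symm⟩

lemma mem_Q5F {u v : V} {β : Bool} {w : CFIVert G} :
    w ∈ Q5F G u v β ↔ ∃ S, w.1 = Sum.inl (u, S) ∧ S ⊆ G.neighborFinset u ∧ Even S.card ∧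
      decide (v ∈ S) = β := by
  constructor
  · intro h
    obtain ⟨p, -, rfl⟩ := Finset.mem_image.mp h
    obtain ⟨h1, h2, h3⟩ := mem_evensBit.mp p.2
    exact ⟨p.1, rfl, h1, h2, h3⟩
  · rintro ⟨S, hw1, h1, h2, h3⟩
    exact Finset.mem_image.mpr ⟨⟨S, mem_evensBit.mpr ⟨h1, h2, h3⟩⟩, Finset.mem_attach _ _,
      Subtype.ext hw1.symm⟩

-- cardinalities
lemma card_P1F {v : V} (h3 : (G.neighborFinset v).card = 3) : (P1F G v).card = 4 := by
  rw [P1F, Finset.card_image_of_injective _ ?_, Finset.card_attach, card_evens h3]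
  intro a b hab
  replace hab := congrArg Subtype.val hab; simp only [Sum.inl.injEq, Prod.mk.injEq] at hab
  exact Subtype.ext hab.2

lemma card_P2F {v : V} (h3 : (G.neighborFinset v).card = 3) : (P2F G v).card = 6 := by
  rw [P2F, Finset.card_image_of_injective _ ?_, Finset.card_attach, Finset.card_product,
    h3, Finset.card_univ, Fintype.card_bool]
  intro a b hab
  replace hab := congrArg Subtype.val hab; simp only [Sum.inr.injEq, Prod.mk.injEq, Prod.mk.injEq] at hab
  exact Subtype.ext (Prod.ext hab.2.1 hab.2.2)

lemma card_P3F {v : V} {T : Finset V} (h3 : (G.neighborFinset v).card = 3) :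
    (P3F G f v T).card = 3 := by
  rw [P3F, Finset.card_image_of_injective _ ?_, Finset.card_attach, h3]
  intro a b hab
  replace hab := congrArg Subtype.val hab; simp only [Sum.inr.injEq, Prod.mk.injEq] at hab
  exact Subtype.ext hab.1

lemma card_Q5F {u v : V} {β : Bool} (h3 : (G.neighborFinset u).card = 3)
    (hv : v ∈ G.neighborFinset u) : (Q5F G u v β).card = 2 := by
  rw [Q5F, Finset.card_image_of_injective _ ?_, Finset.card_attach, card_evensBit h3 hv]
  intro a b hab
  replace hab := congrArg Subtype.val hab; simp only [Sum.inl.injEq, Prod.mk.injEq] at hab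
  exact Subtype.ext hab.2

lemma card_P4F {v : V} {T : Finset V} (h3 : ∀ z : V, (G.neighborFinset z).card = 3) :
    (P4F G f v T).card = 6 := by
  rw [P4F, Finset.card_biUnion ?_]
  · have : ∀ u : {x // x ∈ G.neighborFinset v},
        ((evensBit (G.neighborFinset u.1) v (decide (u.1 ∈ T) ^^ f s(v, u.1))).attach.image
          (fun S => (⟨Sum.inl (u.1, S.1),
            ⟨(mem_evensBit.mp S.2).1, (mem_evensBit.mp S.2).2.1⟩⟩ : CFIVert G))).card = 2 := by
      intro u
      rw [Finset.card_image_of_injective _ ?_, Finset.card_attach,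
        card_evensBit (h3 u.1) ?_]
      · rw [SimpleGraph.mem_neighborFinset]
        exact (adj_of_mem_nb G u.2).symm
      · intro a b hab
        replace hab := congrArg Subtype.val hab; simp only [Sum.inl.injEq, Prod.mk.injEq] at hab
        exact Subtype.ext hab.2
    rw [Finset.sum_congr rfl (fun u _ => this u), Finset.sum_const, Finset.card_attach,
      h3 v, smul_eq_mul]
  · intro a _ b _ hab
    refine Finset.disjoint_left.mpr ?_
    intro w hwa hwb
    obtain ⟨p, -, rfl⟩ := Finset.mem_image.mp hwa
    obtain ⟨q, -, hq⟩ := Finset.mem_image.mp hwb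
    replace hq := congrArg Subtype.val hq; simp only [Sum.inl.injEq, Prod.mk.injEq] at hq
    exact hab (Subtype.ext hq.1.symm)

lemma card_QeF {v u : V} (h3 : (G.neighborFinset v).card = 3) (hu : u ∈ G.neighborFinset v) :
    (QeF G v u).card = 4 := by
  rw [QeF, Finset.card_image_of_injective _ ?_, Finset.card_attach, Finset.card_product,
    Finset.card_erase_of_mem hu, h3, Finset.card_univ, Fintype.card_bool]
  intro a b hab
  replace hab := congrArg Subtype.val hab; simp only [Sum.inr.injEq, Prod.mk.injEq, Prod.mk.injEq] at hab
  exact Subtype.ext (Prod.ext hab.2.1 hab.2.2)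

lemma card_QrF {v u : V} (h3 : (G.neighborFinset v).card = 3) (hu : u ∈ G.neighborFinset v) :
    (QrF G v u).card = 4 := by
  rw [QrF, Finset.card_image_of_injective _ ?_, Finset.card_attach, Finset.card_product,
    Finset.card_erase_of_mem hu, h3, Finset.card_univ, Fintype.card_bool]
  intro a b hab
  have h2 := congrArg Subtype.val hab
  simp only [Sum.inr.injEq, Prod.mk.injEq] at h2
  exact Subtype.ext (Prod.ext h2.1 h2.2.2)

end Pieces
section BallMid

variable {G : SimpleGraph V} [DecidableRel G.Adj] {f : Sym2 V → Bool}

lemma mem_nb_of_adj {v u : V} (h : G.Adj v u) : u ∈ G.neighborFinset v := by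
  rwa [SimpleGraph.mem_neighborFinset]

lemma exists_agree {A T T' : Finset V} (hA : A.card = 3) (hT : T ⊆ A) (hE : Even T.card)
    (hT' : T' ⊆ A) (hE' : Even T'.card) : ∃ u ∈ A, ((u ∈ T) ↔ (u ∈ T')) := by
  by_contra hcon
  push_neg at hcon
  have hdisj : Disjoint T T' := by
    rw [Finset.disjoint_left]
    intro u hu hu'
    rcases hcon u (hT hu) with ⟨-, h⟩ | ⟨h, -⟩
    · exact h hu'
    · exact h hu
  have hun : T ∪ T' = A := by
    apply Finset.Subset.antisymm (Finset.union_subset hT hT')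
    intro u hu
    rw [Finset.mem_union]
    rcases hcon u hu with ⟨h, -⟩ | ⟨-, h⟩
    · exact Or.inl h
    · exact Or.inr h
  have hcard := Finset.card_union_of_disjoint hdisj
  rw [hun, hA] at hcard
  rw [Nat.even_iff] at hE hE'
  omega

lemma ball_mid (hreg : ∀ z : V, G.degree z = 3) (v : V) (T : Finset V)
    (hm : Sum.elim (fun p : V × Finset V => p.2 ⊆ G.neighborFinset p.1 ∧ Even p.2.card)
      (fun p : V × V × Bool => G.Adj p.1 p.2.1) (Sum.inl (v, T))) :
    {w : CFIVert G | (CFIGraph G f).Reachable ⟨Sum.inl (v, T), hm⟩ w ∧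
      (CFIGraph G f).dist ⟨Sum.inl (v, T), hm⟩ w ≤ 3}.ncard = 19 := by
  have hN : ∀ z : V, (G.neighborFinset z).card = 3 := fun z => by
    rw [SimpleGraph.card_neighborFinset_eq_degree]; exact hreg z
  have hmT : T ⊆ G.neighborFinset v ∧ Even T.card := hm
  have hkey : {w : CFIVert G | (CFIGraph G f).Reachable ⟨Sum.inl (v, T), hm⟩ w ∧
      (CFIGraph G f).dist ⟨Sum.inl (v, T), hm⟩ w ≤ 3} =
      ↑(P1F G v ∪ P2F G v ∪ P3F G f v T ∪ P4F G f v T) := by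
    ext w
    rw [Set.mem_setOf_eq, ball3_iff]
    simp only [Finset.coe_union, Set.mem_union, Finset.mem_coe]
    constructor
    · rintro (rfl | hadj | ⟨y, h1, h2⟩ | ⟨y, z, h1, h2, h3⟩)
      · exact Or.inl (Or.inl (Or.inl (mem_P1F.mpr ⟨T, rfl, hmT.1, hmT.2⟩)))
      · rw [adj_mid_iff] at hadj
        obtain ⟨u, hvu, rfl⟩ := hadj
        exact Or.inl (Or.inl (Or.inr (mem_P2F.mpr ⟨u, _, rfl, mem_nb_of_adj hvu⟩)))
      · rw [adj_mid_iff] at h1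
        obtain ⟨u, hvu, rfl⟩ := h1
        replace h2 := adj_edge_iff.mp h2
        rcases h2 with ⟨T', hT', hb, rfl⟩ | rfl
        · exact Or.inl (Or.inl (Or.inl (mem_P1F.mpr ⟨T', rfl, hT'.1, hT'.2⟩)))
        · exact Or.inl (Or.inr (mem_P3F.mpr ⟨u, rfl, mem_nb_of_adj hvu⟩))
      · rw [adj_mid_iff] at h1
        obtain ⟨u, hvu, rfl⟩ := h1
        replace h2 := adj_edge_iff.mp h2
        rcases h2 with ⟨T', hT', hb, rfl⟩ | rfl
        · replace h3 := adj_mid_iff.mp h3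
          obtain ⟨u'', hvu'', rfl⟩ := h3
          exact Or.inl (Or.inl (Or.inr (mem_P2F.mpr ⟨u'', _, rfl, mem_nb_of_adj hvu''⟩)))
        · replace h3 := adj_edge_iff.mp h3
          rcases h3 with ⟨S, hS, hbit, rfl⟩ | rfl
          · exact Or.inr (mem_P4F.mpr ⟨u, S, rfl, mem_nb_of_adj hvu, hS.1, hS.2, hbit⟩)
          · exact Or.inl (Or.inl (Or.inr (mem_P2F.mpr ⟨u, _, rfl, mem_nb_of_adj hvu⟩)))
    · rintro (((h1 | h2) | h3) | h4)
      · obtain ⟨S, hw1, hsub, hev⟩ := mem_P1F.mp h1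
        obtain ⟨w1, wp⟩ := w
        dsimp only at hw1
        subst hw1
        by_cases hST : S = T
        · subst hST
          exact Or.inl (Subtype.ext rfl)
        · obtain ⟨u, hu, hiff⟩ := exists_agree (hN v) hsub hev hmT.1 hmT.2
          refine Or.inr (Or.inr (Or.inl
            ⟨⟨Sum.inr (v, u, decide (u ∈ T)), adj_of_mem_nb G hu⟩, ?_, ?_⟩))
          · exact adj_mid_edge.mpr ⟨rfl, rfl⟩
          · refine (adj_mid_edge.mpr ⟨rfl, ?_⟩).symm
            rw [decide_eq_decide]
            exact hiff.symm
      · obtain ⟨u, β, hw1, hu⟩ := mem_P2F.mp h2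
        obtain ⟨w1, wp⟩ := w
        dsimp only at hw1
        subst hw1
        by_cases hβ : β = decide (u ∈ T)
        · subst hβ
          exact Or.inr (Or.inl (adj_mid_edge.mpr ⟨rfl, rfl⟩))
        · obtain ⟨w0, hw0⟩ : ∃ w0, w0 ∈ (G.neighborFinset v).erase u :=
            Finset.card_pos.mp (by rw [Finset.card_erase_of_mem hu, hN v]; omega)
          have hw0u : w0 ≠ u := (Finset.mem_erase.mp hw0).1
          have hw0v : w0 ∈ G.neighborFinset v := (Finset.mem_erase.mp hw0).2
          obtain ⟨T', hT', hbit'⟩ :=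
            exists_twoBits (hN v) hu hw0v (Ne.symm hw0u) β (decide (w0 ∈ T))
          obtain ⟨hT'sub, hT'ev, hT'bit⟩ := mem_evensBit.mp hT'
          refine Or.inr (Or.inr (Or.inr
            ⟨⟨Sum.inr (v, w0, decide (w0 ∈ T)), adj_of_mem_nb G hw0v⟩,
             ⟨Sum.inl (v, T'), ⟨hT'sub, hT'ev⟩⟩, ?_, ?_, ?_⟩))
          · exact adj_mid_edge.mpr ⟨rfl, rfl⟩
          · exact (adj_mid_edge.mpr ⟨rfl, hbit'.symm⟩).symm
          · exact adj_mid_edge.mpr ⟨rfl, hT'bit.symm⟩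
      · obtain ⟨u, hw1, hu⟩ := mem_P3F.mp h3
        obtain ⟨w1, wp⟩ := w
        dsimp only at hw1
        subst hw1
        exact Or.inr (Or.inr (Or.inl
          ⟨⟨Sum.inr (v, u, decide (u ∈ T)), adj_of_mem_nb G hu⟩,
            adj_mid_edge.mpr ⟨rfl, rfl⟩, adj_edge_edge.mpr ⟨rfl, rfl, rfl⟩⟩))
      · obtain ⟨u, S, hw1, hu, hSsub, hSev, hSbit⟩ := mem_P4F.mp h4
        obtain ⟨w1, wp⟩ := w
        dsimp only at hw1
        subst hw1
        refine Or.inr (Or.inr (Or.inr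
          ⟨⟨Sum.inr (v, u, decide (u ∈ T)), adj_of_mem_nb G hu⟩,
           ⟨Sum.inr (u, v, decide (u ∈ T) ^^ f s(v, u)), (adj_of_mem_nb G hu).symm⟩,
           adj_mid_edge.mpr ⟨rfl, rfl⟩, adj_edge_edge.mpr ⟨rfl, rfl, rfl⟩, ?_⟩))
        exact (adj_mid_edge.mpr ⟨rfl, hSbit.symm⟩).symm
  rw [hkey, Set.ncard_coe_finset]
  have d1 : Disjoint (P1F G v) (P2F G v) := by
    rw [Finset.disjoint_left]
    intro w hw1 hw2
    obtain ⟨S, h1, -⟩ := mem_P1F.mp hw1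
    obtain ⟨u, β, h2, -⟩ := mem_P2F.mp hw2
    rw [h1] at h2
    exact nomatch h2
  have d2 : Disjoint (P1F G v ∪ P2F G v) (P3F G f v T) := by
    rw [Finset.disjoint_left]
    intro w hw1 hw3
    obtain ⟨u, h2, hu⟩ := mem_P3F.mp hw3
    rcases Finset.mem_union.mp hw1 with hw | hw
    · obtain ⟨S, h1, -⟩ := mem_P1F.mp hw
      rw [h1] at h2
      exact nomatch h2
    · obtain ⟨u', β, h1, -⟩ := mem_P2F.mp hw
      rw [h1] at h2
      simp only [Sum.inr.injEq, Prod.mk.injEq] at h2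
      exact (adj_of_mem_nb G hu).ne' h2.1.symm
  have d3 : Disjoint (P1F G v ∪ P2F G v ∪ P3F G f v T) (P4F G f v T) := by
    rw [Finset.disjoint_left]
    intro w hw1 hw4
    obtain ⟨u, S, h2, hu, -⟩ := mem_P4F.mp hw4
    rcases Finset.mem_union.mp hw1 with hw | hw
    · rcases Finset.mem_union.mp hw with hw' | hw'
      · obtain ⟨S', h1, -⟩ := mem_P1F.mp hw'
        rw [h1] at h2
        simp only [Sum.inl.injEq, Prod.mk.injEq] at h2
        exact (adj_of_mem_nb G hu).ne h2.1
      · obtain ⟨u', β, h1, -⟩ := mem_P2F.mp hw'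
        rw [h1] at h2
        exact nomatch h2
    · obtain ⟨u', h1, -⟩ := mem_P3F.mp hw
      rw [h1] at h2
      exact nomatch h2
  rw [Finset.card_union_of_disjoint d3, Finset.card_union_of_disjoint d2,
    Finset.card_union_of_disjoint d1, card_P1F (hN v), card_P2F (hN v), card_P3F (hN v),
    card_P4F hN]

end BallMid
section BallEdge

variable {G : SimpleGraph V} [DecidableRel G.Adj] {f : Sym2 V → Bool}

lemma ball_edge (hreg : ∀ z : V, G.degree z = 3) (v u : V) (b : Bool)
    (he : Sum.elim (fun p : V × Finset V => p.2 ⊆ G.neighborFinset p.1 ∧ Even p.2.card)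
      (fun p : V × V × Bool => G.Adj p.1 p.2.1) (Sum.inr (v, u, b))) :
    {w : CFIVert G | (CFIGraph G f).Reachable ⟨Sum.inr (v, u, b), he⟩ w ∧
      (CFIGraph G f).dist ⟨Sum.inr (v, u, b), he⟩ w ≤ 3}.ncard = 20 := by
  have hN : ∀ z : V, (G.neighborFinset z).card = 3 := fun z => by
    rw [SimpleGraph.card_neighborFinset_eq_degree]; exact hreg z
  have hadjvu : G.Adj v u := he
  have hunb : u ∈ G.neighborFinset v := mem_nb_of_adj hadjvu
  have hvnb : v ∈ G.neighborFinset u := mem_nb_of_adj hadjvu.symm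
  set xx : CFIVert G := ⟨Sum.inr (v, u, b), he⟩ with hxx
  set pp : CFIVert G := ⟨Sum.inr (u, v, b ^^ f s(v, u)), hadjvu.symm⟩ with hpp
  have hkey : {w : CFIVert G | (CFIGraph G f).Reachable xx w ∧ (CFIGraph G f).dist xx w ≤ 3} =
      ↑({xx} ∪ P1F G v ∪ QeF G v u ∪ {pp} ∪ QrF G v u ∪
        Q5F G u v (b ^^ f s(v, u)) ∪ QeF G u v) := by
    ext w
    rw [Set.mem_setOf_eq, ball3_iff]
    simp only [Finset.coe_union, Set.mem_union, Finset.mem_coe, Finset.mem_singleton]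
    constructor
    · rintro (rfl | hadj | ⟨y, h1, h2⟩ | ⟨y, z, h1, h2, h3⟩)
      · exact Or.inl (Or.inl (Or.inl (Or.inl (Or.inl (Or.inl rfl)))))
      · rw [hxx, adj_edge_iff] at hadj
        rcases hadj with ⟨T, hT, hb, rfl⟩ | rfl
        · exact Or.inl (Or.inl (Or.inl (Or.inl (Or.inl (Or.inr
            (mem_P1F.mpr ⟨T, rfl, hT.1, hT.2⟩)))))) 
        · exact Or.inl (Or.inl (Or.inl (Or.inr rfl)))
      · rw [hxx, adj_edge_iff] at h1
        rcases h1 with ⟨T, hT, hb, rfl⟩ | rfl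
        · replace h2 := adj_mid_iff.mp h2
          obtain ⟨u'', hvu'', rfl⟩ := h2
          by_cases hu'' : u'' = u
          · subst hu''
            exact Or.inl (Or.inl (Or.inl (Or.inl (Or.inl (Or.inl
              (Subtype.ext (by rw [hb])))))))
          · exact Or.inl (Or.inl (Or.inl (Or.inl (Or.inr
              (mem_QeF.mpr ⟨u'', _, rfl, mem_nb_of_adj hvu'', hu''⟩)))))
        · replace h2 := adj_edge_iff.mp h2
          rcases h2 with ⟨S, hS, hbit, rfl⟩ | rfl
          · exact Or.inl (Or.inr (mem_Q5F.mpr ⟨S, rfl, hS.1, hS.2, hbit⟩))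
          · refine Or.inl (Or.inl (Or.inl (Or.inl (Or.inl (Or.inl (Subtype.ext ?_))))))
            show Sum.inr (v, u, (b ^^ f s(v, u)) ^^ f s(u, v)) = Sum.inr (v, u, b)
            rw [Sym2.eq_swap, Bool.xor_assoc, Bool.xor_self, Bool.xor_false]
      · rw [hxx, adj_edge_iff] at h1
        rcases h1 with ⟨T, hT, hb, rfl⟩ | rfl
        · replace h2 := adj_mid_iff.mp h2
          obtain ⟨u'', hvu'', rfl⟩ := h2
          replace h3 := adj_edge_iff.mp h3
          rcases h3 with ⟨T', hT', hb', rfl⟩ | rfl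
          · exact Or.inl (Or.inl (Or.inl (Or.inl (Or.inl (Or.inr
              (mem_P1F.mpr ⟨T', rfl, hT'.1, hT'.2⟩))))))
          · by_cases hu'' : u'' = u
            · subst hu''
              exact Or.inl (Or.inl (Or.inl (Or.inr (Subtype.ext (by rw [hb])))))
            · exact Or.inl (Or.inl (Or.inr
                (mem_QrF.mpr ⟨u'', _, rfl, mem_nb_of_adj hvu'', hu''⟩)))
        · replace h2 := adj_edge_iff.mp h2
          rcases h2 with ⟨S, hS, hbit, rfl⟩ | rfl
          · replace h3 := adj_mid_iff.mp h3
            obtain ⟨w'', huw'', rfl⟩ := h3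
            by_cases hw'' : w'' = v
            · subst hw''
              exact Or.inl (Or.inl (Or.inl (Or.inr (Subtype.ext (by rw [hbit])))))
            · exact Or.inr (mem_QeF.mpr ⟨w'', _, rfl, mem_nb_of_adj huw'', hw''⟩)
          · replace h3 := adj_edge_iff.mp h3
            rcases h3 with ⟨T', hT', hb', rfl⟩ | rfl
            · exact Or.inl (Or.inl (Or.inl (Or.inl (Or.inl (Or.inr
                (mem_P1F.mpr ⟨T', rfl, hT'.1, hT'.2⟩))))))
            · refine Or.inl (Or.inl (Or.inl (Or.inr (Subtype.ext ?_))))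
              show Sum.inr (u, v, ((b ^^ f s(v, u)) ^^ f s(u, v)) ^^ f s(v, u)) =
                Sum.inr (u, v, b ^^ f s(v, u))
              rw [Sym2.eq_swap, Bool.xor_assoc, Bool.xor_self, Bool.xor_false]
    · rintro ((((((hA | hB) | hC) | hD) | hE) | hF) | hG)
      · exact Or.inl hA
      · obtain ⟨S, hw1, hsub, hev⟩ := mem_P1F.mp hB
        obtain ⟨w1, wp⟩ := w
        dsimp only at hw1
        subst hw1
        by_cases hSb : decide (u ∈ S) = b
        · exact Or.inr (Or.inl ((adj_mid_edge.mpr ⟨rfl, hSb.symm⟩).symm))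
        · obtain ⟨w0, hw0⟩ : ∃ w0, w0 ∈ (G.neighborFinset v).erase u :=
            Finset.card_pos.mp (by rw [Finset.card_erase_of_mem hunb, hN v]; omega)
          have hw0u : w0 ≠ u := (Finset.mem_erase.mp hw0).1
          have hw0v : w0 ∈ G.neighborFinset v := (Finset.mem_erase.mp hw0).2
          obtain ⟨T1, hT1, hbit1⟩ :=
            exists_twoBits (hN v) hunb hw0v (Ne.symm hw0u) b (decide (w0 ∈ S))
          obtain ⟨hT1sub, hT1ev, hT1bit⟩ := mem_evensBit.mp hT1
          refine Or.inr (Or.inr (Or.inr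
            ⟨⟨Sum.inl (v, T1), ⟨hT1sub, hT1ev⟩⟩,
             ⟨Sum.inr (v, w0, decide (w0 ∈ S)), adj_of_mem_nb G hw0v⟩, ?_, ?_, ?_⟩))
          · exact (adj_mid_edge.mpr ⟨rfl, hT1bit.symm⟩).symm
          · exact adj_mid_edge.mpr ⟨rfl, hbit1.symm⟩
          · exact (adj_mid_edge.mpr ⟨rfl, rfl⟩).symm
      · obtain ⟨u', β, hw1, hu', hne⟩ := mem_QeF.mp hC
        obtain ⟨w1, wp⟩ := w
        dsimp only at hw1
        subst hw1
        obtain ⟨T1, hT1, hbit1⟩ := exists_twoBits (hN v) hunb hu' (Ne.symm hne) b β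
        obtain ⟨hT1sub, hT1ev, hT1bit⟩ := mem_evensBit.mp hT1
        refine Or.inr (Or.inr (Or.inl ⟨⟨Sum.inl (v, T1), ⟨hT1sub, hT1ev⟩⟩, ?_, ?_⟩))
        · exact (adj_mid_edge.mpr ⟨rfl, hT1bit.symm⟩).symm
        · exact adj_mid_edge.mpr ⟨rfl, hbit1.symm⟩
      · subst hD
        exact Or.inr (Or.inl (adj_edge_edge.mpr ⟨rfl, rfl, rfl⟩))
      · obtain ⟨u', β, hw1, hu', hne⟩ := mem_QrF.mp hE
        obtain ⟨w1, wp⟩ := w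
        dsimp only at hw1
        subst hw1
        obtain ⟨T1, hT1, hbit1⟩ :=
          exists_twoBits (hN v) hunb hu' (Ne.symm hne) b (β ^^ f s(v, u'))
        obtain ⟨hT1sub, hT1ev, hT1bit⟩ := mem_evensBit.mp hT1
        refine Or.inr (Or.inr (Or.inr
          ⟨⟨Sum.inl (v, T1), ⟨hT1sub, hT1ev⟩⟩,
           ⟨Sum.inr (v, u', decide (u' ∈ T1)), adj_of_mem_nb G hu'⟩, ?_, ?_, ?_⟩))
        · exact (adj_mid_edge.mpr ⟨rfl, hT1bit.symm⟩).symm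
        · exact adj_mid_edge.mpr ⟨rfl, rfl⟩
        · refine adj_edge_edge.mpr ⟨rfl, rfl, ?_⟩
          rw [hbit1, Bool.xor_assoc, Bool.xor_self, Bool.xor_false]
      · obtain ⟨S, hw1, hsub, hev, hbit⟩ := mem_Q5F.mp hF
        obtain ⟨w1, wp⟩ := w
        dsimp only at hw1
        subst hw1
        refine Or.inr (Or.inr (Or.inl ⟨pp, adj_edge_edge.mpr ⟨rfl, rfl, rfl⟩, ?_⟩))
        exact (adj_mid_edge.mpr ⟨rfl, hbit.symm⟩).symm
      · obtain ⟨w', β, hw1, hw', hne⟩ := mem_QeF.mp hG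
        obtain ⟨w1, wp⟩ := w
        dsimp only at hw1
        subst hw1
        obtain ⟨S, hS, hbitw⟩ :=
          exists_twoBits (hN u) hvnb hw' (Ne.symm hne) (b ^^ f s(v, u)) β
        obtain ⟨hSsub, hSev, hSbit⟩ := mem_evensBit.mp hS
        refine Or.inr (Or.inr (Or.inr
          ⟨pp, ⟨Sum.inl (u, S), ⟨hSsub, hSev⟩⟩,
            adj_edge_edge.mpr ⟨rfl, rfl, rfl⟩, ?_, ?_⟩))
        · exact (adj_mid_edge.mpr ⟨rfl, hSbit.symm⟩).symm
        · exact adj_mid_edge.mpr ⟨rfl, hbitw.symm⟩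
  rw [hkey, Set.ncard_coe_finset]
  -- first components of members, for disjointness
  have hxval : xx.1 = Sum.inr (v, u, b) := rfl
  have hpval : pp.1 = Sum.inr (u, v, b ^^ f s(v, u)) := rfl
  have hvu : v ≠ u := hadjvu.ne
  have d1 : Disjoint ({xx} : Finset (CFIVert G)) (P1F G v) := by
    rw [Finset.disjoint_left]
    rintro w hw1 hw2
    rw [Finset.mem_singleton] at hw1
    subst hw1
    obtain ⟨S, h1, -⟩ := mem_P1F.mp hw2
    rw [hxval] at h1
    exact nomatch h1
  have d2 : Disjoint ({xx} ∪ P1F G v) (QeF G v u) := by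
    rw [Finset.disjoint_left]
    rintro w hw1 hw2
    obtain ⟨u', β, h2, hu', hne⟩ := mem_QeF.mp hw2
    rcases Finset.mem_union.mp hw1 with hw | hw
    · rw [Finset.mem_singleton] at hw
      subst hw
      rw [hxval] at h2
      simp only [Sum.inr.injEq, Prod.mk.injEq] at h2
      exact hne h2.2.1.symm
    · obtain ⟨S, h1, -⟩ := mem_P1F.mp hw
      rw [h1] at h2
      exact nomatch h2
  have d3 : Disjoint ({xx} ∪ P1F G v ∪ QeF G v u) ({pp} : Finset (CFIVert G)) := by
    rw [Finset.disjoint_left]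
    rintro w hw1 hw2
    rw [Finset.mem_singleton] at hw2
    subst hw2
    rcases Finset.mem_union.mp hw1 with hw | hw
    · rcases Finset.mem_union.mp hw with hw' | hw'
      · rw [Finset.mem_singleton] at hw'
        have := congrArg Subtype.val hw'
        rw [hpval, hxval] at this
        simp only [Sum.inr.injEq, Prod.mk.injEq] at this
        exact hvu this.1.symm
      · obtain ⟨S, h1, -⟩ := mem_P1F.mp hw'
        rw [hpval] at h1
        exact nomatch h1
    · obtain ⟨u', β, h2, hu', hne⟩ := mem_QeF.mp hw
      rw [hpval] at h2
      simp only [Sum.inr.injEq, Prod.mk.injEq] at h2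
      exact hvu h2.1.symm
  have d4 : Disjoint ({xx} ∪ P1F G v ∪ QeF G v u ∪ {pp}) (QrF G v u) := by
    rw [Finset.disjoint_left]
    rintro w hw1 hw2
    obtain ⟨e1, β, h2, he1, hne1⟩ := mem_QrF.mp hw2
    have he1v : e1 ≠ v := (adj_of_mem_nb G he1).ne'
    rcases Finset.mem_union.mp hw1 with hw | hw
    · rcases Finset.mem_union.mp hw with hw' | hw'
      · rcases Finset.mem_union.mp hw' with hw'' | hw''
        · rw [Finset.mem_singleton] at hw''
          subst hw''
          rw [hxval] at h2
          simp only [Sum.inr.injEq, Prod.mk.injEq] at h2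
          exact he1v h2.1.symm
        · obtain ⟨S, h1, -⟩ := mem_P1F.mp hw''
          rw [h1] at h2
          exact nomatch h2
      · obtain ⟨u', β', h1, hu', hne'⟩ := mem_QeF.mp hw'
        rw [h1] at h2
        simp only [Sum.inr.injEq, Prod.mk.injEq] at h2
        exact he1v h2.1.symm
    · rw [Finset.mem_singleton] at hw
      subst hw
      rw [hpval] at h2
      simp only [Sum.inr.injEq, Prod.mk.injEq] at h2
      exact hne1 h2.1.symm
  have d5 : Disjoint ({xx} ∪ P1F G v ∪ QeF G v u ∪ {pp} ∪ QrF G v u)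
      (Q5F G u v (b ^^ f s(v, u))) := by
    rw [Finset.disjoint_left]
    rintro w hw1 hw2
    obtain ⟨S, h2, -⟩ := mem_Q5F.mp hw2
    rcases Finset.mem_union.mp hw1 with hw | hw
    · rcases Finset.mem_union.mp hw with hw' | hw'
      · rcases Finset.mem_union.mp hw' with hw'' | hw''
        · rcases Finset.mem_union.mp hw'' with hw3 | hw3
          · rw [Finset.mem_singleton] at hw3
            subst hw3
            rw [hxval] at h2
            exact nomatch h2
          · obtain ⟨S', h1, -⟩ := mem_P1F.mp hw3
            rw [h1] at h2
            simp only [Sum.inl.injEq, Prod.mk.injEq] at h2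
            exact hvu h2.1
        · obtain ⟨u', β, h1, -, -⟩ := mem_QeF.mp hw''
          rw [h1] at h2
          exact nomatch h2
      · rw [Finset.mem_singleton] at hw'
        subst hw'
        rw [hpval] at h2
        exact nomatch h2
    · obtain ⟨u', β, h1, -, -⟩ := mem_QrF.mp hw
      rw [h1] at h2
      exact nomatch h2
  have d6 : Disjoint ({xx} ∪ P1F G v ∪ QeF G v u ∪ {pp} ∪ QrF G v u ∪
      Q5F G u v (b ^^ f s(v, u))) (QeF G u v) := by
    rw [Finset.disjoint_left]
    rintro w hw1 hw2
    obtain ⟨w', β, h2, hw', hnew⟩ := mem_QeF.mp hw2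
    rcases Finset.mem_union.mp hw1 with hw | hw
    · rcases Finset.mem_union.mp hw with hw' | hw'
      · rcases Finset.mem_union.mp hw' with hw'' | hw''
        · rcases Finset.mem_union.mp hw'' with hw3 | hw3
          · rcases Finset.mem_union.mp hw3 with hw4 | hw4
            · rw [Finset.mem_singleton] at hw4
              subst hw4
              rw [hxval] at h2
              simp only [Sum.inr.injEq, Prod.mk.injEq] at h2
              exact hvu h2.1
            · obtain ⟨S, h1, -⟩ := mem_P1F.mp hw4
              rw [h1] at h2
              exact nomatch h2
          · obtain ⟨u', β', h1, -, -⟩ := mem_QeF.mp hw3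
            rw [h1] at h2
            simp only [Sum.inr.injEq, Prod.mk.injEq] at h2
            exact hvu h2.1
        · rw [Finset.mem_singleton] at hw''
          subst hw''
          rw [hpval] at h2
          simp only [Sum.inr.injEq, Prod.mk.injEq] at h2
          exact hnew h2.2.1.symm
      · obtain ⟨e1, β', h1, he1, hne1⟩ := mem_QrF.mp hw'
        rw [h1] at h2
        simp only [Sum.inr.injEq, Prod.mk.injEq] at h2
        exact hne1 h2.1
    · obtain ⟨S, h1, -⟩ := mem_Q5F.mp hw
      rw [h1] at h2
      exact nomatch h2
  rw [Finset.card_union_of_disjoint d6, Finset.card_union_of_disjoint d5,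
    Finset.card_union_of_disjoint d4, Finset.card_union_of_disjoint d3,
    Finset.card_union_of_disjoint d2, Finset.card_union_of_disjoint d1,
    Finset.card_singleton, Finset.card_singleton, card_P1F (hN v),
    card_QeF (hN v) hunb, card_QrF (hN v) hunb, card_Q5F (hN u) hvnb,
    card_QeF (hN u) hvnb]

end BallEdge
section IsoBall

lemma iso_ball_ncard {A B : Type*} {H1 : SimpleGraph A} {H2 : SimpleGraph B}
    (e : H1 ≃g H2) (x : A) :
    {w : B | H2.Reachable (e x) w ∧ H2.dist (e x) w ≤ 3}.ncard =
      {w : A | H1.Reachable x w ∧ H1.dist x w ≤ 3}.ncard := by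
  have hmap : ∀ a b : A, H1.Adj a b → H2.Adj (e a) (e b) := fun a b h => e.map_adj_iff.mpr h
  have hmap' : ∀ a b : B, H2.Adj a b → H1.Adj (e.symm a) (e.symm b) :=
    fun a b h => e.symm.map_adj_iff.mpr h
  have hset : {w : B | H2.Reachable (e x) w ∧ H2.dist (e x) w ≤ 3} =
      e '' {w : A | H1.Reachable x w ∧ H1.dist x w ≤ 3} := by
    ext w
    rw [Set.mem_setOf_eq, ball3_iff]
    constructor
    · intro hw
      refine ⟨e.symm w, ?_, e.apply_symm_apply w⟩
      rw [Set.mem_setOf_eq, ball3_iff]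
      rcases hw with h | h | ⟨y, h1, h2⟩ | ⟨y, z, h1, h2, h3⟩
      · left
        rw [h, e.symm_apply_apply]
      · right; left
        have := hmap' _ _ h
        rwa [e.symm_apply_apply] at this
      · right; right; left
        refine ⟨e.symm y, ?_, hmap' _ _ h2⟩
        have := hmap' _ _ h1
        rwa [e.symm_apply_apply] at this
      · right; right; right
        refine ⟨e.symm y, e.symm z, ?_, hmap' _ _ h2, hmap' _ _ h3⟩
        have := hmap' _ _ h1
        rwa [e.symm_apply_apply] at this
    · rintro ⟨a, ha, rfl⟩
      rw [Set.mem_setOf_eq, ball3_iff] at ha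
      rcases ha with rfl | h | ⟨y, h1, h2⟩ | ⟨y, z, h1, h2, h3⟩
      · left; rfl
      · right; left
        exact hmap _ _ h
      · right; right; left
        exact ⟨e y, hmap _ _ h1, hmap _ _ h2⟩
      · right; right; right
        exact ⟨e y, e z, hmap _ _ h1, hmap _ _ h2, hmap _ _ h3⟩
  rw [hset]
  exact Set.ncard_image_of_injective _ (fun a b hab => e.toEquiv.injective hab)

end IsoBall

/-- In `Y_f(G)` over a connected 3-regular graph `G`, every middle vertex has
exactly 19 vertices within distance 3 (itself included), every edge vertex has
exactly 20; consequently every isomorphism `Y_f(G) ≃ Y_g(G)` maps middle vertices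
to middle vertices and edge vertices to edge vertices. -/
theorem cfi_ball_sizes {V : Type*} [Fintype V] [DecidableEq V]
    (G : SimpleGraph V) [DecidableRel G.Adj]
    (hconn : G.Connected) (hreg : ∀ v, G.degree v = 3) (f g : Sym2 V → Bool) :
    (∀ x : CFIVert G, (∃ p h, x = ⟨Sum.inl p, h⟩) →
      {w : CFIVert G | (CFIGraph G f).Reachable x w ∧ (CFIGraph G f).dist x w ≤ 3}.ncard = 19) ∧
    (∀ x : CFIVert G, (∃ p h, x = ⟨Sum.inr p, h⟩) →
      {w : CFIVert G | (CFIGraph G f).Reachable x w ∧ (CFIGraph G f).dist x w ≤ 3}.ncard = 20) ∧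
    (∀ (φ : CFIGraph G f ≃g CFIGraph G g) (x : CFIVert G),
      ((∃ p h, x = ⟨Sum.inl p, h⟩) → ∃ q h', φ x = ⟨Sum.inl q, h'⟩) ∧
      ((∃ p h, x = ⟨Sum.inr p, h⟩) → ∃ q h', φ x = ⟨Sum.inr q, h'⟩)) := by
  refine ⟨?_, ?_, ?_⟩
  · rintro x ⟨p, h, rfl⟩
    exact ball_mid hreg p.1 p.2 h
  · rintro x ⟨p, h, rfl⟩
    exact ball_edge hreg p.1 p.2.1 p.2.2 h
  · intro φ x
    constructor
    · rintro ⟨p, h, rfl⟩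
      have h19 := ball_mid (f := f) hreg p.1 p.2 h
      have htrans := iso_ball_ncard φ (⟨Sum.inl p, h⟩ : CFIVert G)
      rcases cfivert_cases (φ ⟨Sum.inl p, h⟩) with ⟨q, h', hq⟩ | ⟨q, h', hq⟩
      · exact ⟨q, h', hq⟩
      · exfalso
        have h20 := ball_edge (f := g) hreg q.1 q.2.1 q.2.2 h'
        rw [← hq] at h20
        rw [h19, h20] at htrans
        omega
    · rintro ⟨p, h, rfl⟩
      have h20 := ball_edge (f := f) hreg p.1 p.2.1 p.2.2 h
      have htrans := iso_ball_ncard φ (⟨Sum.inr p, h⟩ : CFIVert G)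
      rcases cfivert_cases (φ ⟨Sum.inr p, h⟩) with ⟨q, h', hq⟩ | ⟨q, h', hq⟩
      · exfalso
        have h19 := ball_mid (f := g) hreg q.1 q.2 h'
        rw [← hq] at h19
        rw [h19, h20] at htrans
        omega
      · exact ⟨q, h', hq⟩
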